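/- Let C be a convex subset of the open unit disk, c ∉ C, where c is the intersection of crossing chords defining regions R¹,R²,R³,R⁴ in cyclic order. If C intersects both the closed region closure(R⁴) and the closed opposite-adjacent region closure(R³), and C also intersects R¹, then C ∩ R² = ∅, and hence C \ R¹ = C ∩ (closure(R³) ∪ closure(R⁴)) is convex. -/
import Mathlib

/-- The cross product (signed area form) of two vectors in the plane. -/
def crossP (u v : ℝ × ℝ) : ℝ := u.1 * v.2 - u.2 * v.1

/-- The open unit disk in the plane. -/
def unitDisk : Set (ℝ × ℝ) := {p | p.1 ^ 2 + p.2 ^ 2 < 1}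

lemma crossP_affine (u c : ℝ × ℝ) : ∀ (a b : ℝ) (x y : ℝ × ℝ), a + b = 1 →
    crossP u (a • x + b • y - c) = a * crossP u (x - c) + b * crossP u (y - c) := by
  intro a b x y hab
  simp only [crossP, Prod.fst_sub, Prod.snd_sub, Prod.fst_add, Prod.snd_add,
    Prod.smul_fst, Prod.smul_snd, smul_eq_mul]
  linear_combination (u.1 * c.2 - u.2 * c.1) * hab

lemma crossP_smul (u w : ℝ × ℝ) (ε : ℝ) : crossP u (ε • w) = ε * crossP u w := by
  simp only [crossP, Prod.smul_fst, Prod.smul_snd, smul_eq_mul]; ring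

lemma eq_of_crossP_eq_zero (u v : ℝ × ℝ) (huv : crossP u v ≠ 0) (d : ℝ × ℝ)
    (h1 : crossP u d = 0) (h2 : crossP v d = 0) : d = 0 := by
  unfold crossP at h1 h2 huv
  have hd1 : d.1 * (u.1 * v.2 - u.2 * v.1) = 0 := by linear_combination v.1 * h1 - u.1 * h2
  have hd2 : d.2 * (u.1 * v.2 - u.2 * v.1) = 0 := by linear_combination v.2 * h1 - u.2 * h2
  have e1 : d.1 = 0 := (mul_eq_zero.mp hd1).resolve_right huv
  have e2 : d.2 = 0 := (mul_eq_zero.mp hd2).resolve_right huv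
  exact Prod.ext e1 e2

lemma exists_zero_on_segment (C : Set (ℝ × ℝ)) (hC : Convex ℝ C) (F G : ℝ × ℝ → ℝ)
    (hF : ∀ (a b : ℝ) (x y : ℝ × ℝ), a + b = 1 → F (a • x + b • y) = a * F x + b * F y)
    (hG : ∀ (a b : ℝ) (x y : ℝ × ℝ), a + b = 1 → G (a • x + b • y) = a * G x + b * G y)
    (p q : ℝ × ℝ) (hp : p ∈ C) (hq : q ∈ C) (hFp : 0 ≤ F p) (hFq : F q ≤ 0) :
    ∃ r ∈ C, F r = 0 ∧ ∃ a b : ℝ, 0 ≤ a ∧ 0 ≤ b ∧ a + b = 1 ∧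
      G r = a * G p + b * G q := by
  rcases eq_or_lt_of_le hFp with h0 | h0
  · exact ⟨p, hp, h0.symm, 1, 0, zero_le_one, le_refl 0, by ring, by ring⟩
  · have hs : 0 < F p - F q := by linarith
    obtain ⟨t, ht0, ht1, htF⟩ : ∃ t : ℝ, 0 ≤ t ∧ t ≤ 1 ∧ (1 - t) * F p + t * F q = 0 := by
      refine ⟨F p / (F p - F q), div_nonneg hFp hs.le, ?_, ?_⟩
      · rw [div_le_one hs]; linarith
      · field_simp
        ring
    have hab : (1 - t) + t = 1 := by ring
    exact ⟨(1 - t) • p + t • q, hC hp hq (by linarith) ht0 hab,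
      by rw [hF _ _ _ _ hab]; linarith, 1 - t, t, by linarith, ht0, hab, hG _ _ _ _ hab⟩

lemma unitDisk_convex : Convex ℝ unitDisk := by
  intro x hx y hy a b ha hb hab
  simp only [unitDisk, Set.mem_setOf_eq, Prod.fst_add, Prod.snd_add, Prod.smul_fst,
    Prod.smul_snd, smul_eq_mul] at *
  rcases eq_or_lt_of_le ha with h | h
  · have hb1 : b = 1 := by linarith
    simpa [← h, hb1] using hy
  · have hb' : b = 1 - a := by linarith
    subst hb'
    nlinarith [mul_nonneg h.le hb, mul_nonneg (mul_nonneg h.le hb) (sq_nonneg (x.1 - y.1)),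
      mul_nonneg (mul_nonneg h.le hb) (sq_nonneg (x.2 - y.2)),
      mul_lt_mul_of_pos_left hx h, mul_le_mul_of_nonneg_left hy.le hb]

lemma mem_closure_aux (F G : ℝ × ℝ → ℝ)
    (hF : ∀ (a b : ℝ) (x y : ℝ × ℝ), a + b = 1 → F (a • x + b • y) = a * F x + b * F y)
    (hG : ∀ (a b : ℝ) (x y : ℝ × ℝ), a + b = 1 → G (a • x + b • y) = a * G x + b * G y)
    (y : ℝ × ℝ) (hyD : y ∈ unitDisk) (hyF : F y < 0) (hyG : G y < 0)
    (x : ℝ × ℝ) (hx : x ∈ unitDisk) (hxF : F x ≤ 0) (hxG : G x ≤ 0) :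
    x ∈ closure (unitDisk ∩ {z | F z < 0 ∧ G z < 0}) := by
  have hcont : Continuous (fun t : ℝ => (1 - t) • x + t • y) := by continuity
  have htend : Filter.Tendsto (fun t : ℝ => (1 - t) • x + t • y)
      (nhdsWithin 0 (Set.Ioi 0)) (nhds x) := by
    simpa using (hcont.tendsto 0).mono_left nhdsWithin_le_nhds
  refine mem_closure_of_tendsto htend ?_
  have hev : ∀ᶠ t : ℝ in nhdsWithin 0 (Set.Ioi 0), t ∈ Set.Ioo (0:ℝ) 1 :=
    Ioo_mem_nhdsGT_of_mem (by constructor <;> norm_num)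
  filter_upwards [hev] with t ht
  have hab : (1 - t) + t = 1 := by ring
  have h1 : (0:ℝ) ≤ 1 - t := by linarith [ht.2]
  refine ⟨unitDisk_convex hx hyD h1 ht.1.le hab, ?_, ?_⟩
  · rw [hF _ _ _ _ hab]
    nlinarith [mul_nonneg h1 (neg_nonneg.2 hxF), mul_pos ht.1 (neg_pos.2 hyF)]
  · rw [hG _ _ _ _ hab]
    nlinarith [mul_nonneg h1 (neg_nonneg.2 hxG), mul_pos ht.1 (neg_pos.2 hyG)]

lemma crossP_cont (u c : ℝ × ℝ) : Continuous fun x : ℝ × ℝ => crossP u (x - c) := by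
  unfold crossP
  fun_prop

lemma halfplane_convex (v c : ℝ × ℝ) : Convex ℝ {x : ℝ × ℝ | crossP v (x - c) ≤ 0} := by
  intro x hx y hy a b ha hb hab
  simp only [Set.mem_setOf_eq] at *
  rw [crossP_affine v c a b x y hab]
  nlinarith [mul_nonneg ha (neg_nonneg.2 hx), mul_nonneg hb (neg_nonneg.2 hy)]

lemma exists_near (c : ℝ × ℝ) (hc : c ∈ unitDisk) (w : ℝ × ℝ) :
    ∃ ε : ℝ, 0 < ε ∧ c + ε • w ∈ unitDisk := by
  have hDiskOpen : IsOpen unitDisk := by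
    have h : Continuous fun p : ℝ × ℝ => p.1 ^ 2 + p.2 ^ 2 := by fun_prop
    exact isOpen_lt h continuous_const
  have hcont : Continuous (fun ε : ℝ => c + ε • w) := by continuity
  have htend : Filter.Tendsto (fun ε : ℝ => c + ε • w)
      (nhdsWithin 0 (Set.Ioi 0)) (nhds c) := by
    simpa using (hcont.tendsto 0).mono_left nhdsWithin_le_nhds
  obtain ⟨ε, hεD, hε0⟩ := ((htend.eventually (hDiskOpen.eventually_mem hc)).and self_mem_nhdsWithin).exists
  exact ⟨ε, hε0, hεD⟩

/-- let `R¹, R², R³, R⁴` (in cyclic order) be the four open regions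
of the open unit disk determined by two chords crossing at `c`, and let `C` be a
convex subset of the open disk with `c ∉ C`.  If `C` meets `closure R⁴`,
`closure R³` and `R¹`, then `C ∩ R² = ∅`, and hence
`C \ R¹ = C ∩ (closure R³ ∪ closure R⁴)` is convex. -/
theorem diff_region_convex (c u v : ℝ × ℝ)
    (hu : u ≠ 0) (hv : v ≠ 0) (huv : crossP u v ≠ 0) (hcd : c ∈ unitDisk)
    (R1 R2 R3 R4 : Set (ℝ × ℝ))
    (hR1 : R1 = unitDisk ∩ {x | crossP u (x - c) > 0 ∧ crossP v (x - c) > 0})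
    (hR2 : R2 = unitDisk ∩ {x | crossP u (x - c) < 0 ∧ crossP v (x - c) > 0})
    (hR3 : R3 = unitDisk ∩ {x | crossP u (x - c) < 0 ∧ crossP v (x - c) < 0})
    (hR4 : R4 = unitDisk ∩ {x | crossP u (x - c) > 0 ∧ crossP v (x - c) < 0})
    (C : Set (ℝ × ℝ)) (hC : Convex ℝ C) (hCd : C ⊆ unitDisk) (hcC : c ∉ C)
    (h4 : (C ∩ closure R4).Nonempty) (h3 : (C ∩ closure R3).Nonempty)
    (h1 : (C ∩ R1).Nonempty) :
    C ∩ R2 = ∅ ∧ C \ R1 = C ∩ (closure R3 ∪ closure R4) ∧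
      Convex ℝ (C \ R1) := by
  have hFa := crossP_affine u c
  have hGa := crossP_affine v c
  -- closure bounds
  have hclR3 : closure R3 ⊆ {x | crossP u (x - c) ≤ 0 ∧ crossP v (x - c) ≤ 0} := by
    apply closure_minimal
    · rw [hR3]; rintro x ⟨-, h1, h2⟩; exact ⟨h1.le, h2.le⟩
    · rw [Set.setOf_and]
      exact (isClosed_le (crossP_cont u c) continuous_const).inter
        (isClosed_le (crossP_cont v c) continuous_const)
  have hclR4 : closure R4 ⊆ {x | 0 ≤ crossP u (x - c) ∧ crossP v (x - c) ≤ 0} := by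
    apply closure_minimal
    · rw [hR4]; rintro x ⟨-, h1, h2⟩; exact ⟨h1.le, h2.le⟩
    · rw [Set.setOf_and]
      exact (isClosed_le continuous_const (crossP_cont u c)).inter
        (isClosed_le (crossP_cont v c) continuous_const)
  obtain ⟨x4, hx4C, hx4⟩ := h4
  obtain ⟨x3, hx3C, hx3⟩ := h3
  obtain ⟨x1, hx1C, hx1⟩ := h1
  have hx4' := hclR4 hx4
  have hx3' := hclR3 hx3
  rw [hR1] at hx1
  obtain ⟨hx1D, hx1f, hx1g⟩ := hx1
  -- the point r34 on [x4, x3] where f = 0 and g ≤ 0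
  obtain ⟨r34, hr34C, hr34F, a0, b0, ha0, hb0, hab0, hr34G⟩ :=
    exists_zero_on_segment C hC (fun z => crossP u (z - c)) (fun z => crossP v (z - c)) hFa hGa x4 x3 hx4C hx3C hx4'.1 hx3'.1
  have hr34g : crossP v (r34 - c) ≤ 0 := by
    rw [hr34G]
    nlinarith [mul_nonneg ha0 (neg_nonneg.2 hx4'.2), mul_nonneg hb0 (neg_nonneg.2 hx3'.2)]
  -- key: no point of C with f = 0 and g ≥ 0
  have hkey : ∀ p ∈ C, crossP u (p - c) = 0 → 0 ≤ crossP v (p - c) → False := by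
    intro p hpC hpF hpG
    obtain ⟨r, hrC, hrG, a', b', ha', hb', hab', hrF⟩ :=
      exists_zero_on_segment C hC (fun z => crossP v (z - c)) (fun z => crossP u (z - c)) hGa hFa p r34 hpC hr34C hpG hr34g
    have hrF0 : crossP u (r - c) = 0 := by rw [hrF, hpF, hr34F]; ring
    have hrc : r = c := by
      have h := eq_of_crossP_eq_zero u v huv (r - c) hrF0 hrG
      exact sub_eq_zero.mp h
    exact hcC (hrc ▸ hrC)
  -- first conclusion
  have hR2empty : C ∩ R2 = ∅ := by
    by_contra h
    obtain ⟨x2, hx2C, hx2⟩ := Set.nonempty_iff_ne_empty.mpr h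
    rw [hR2] at hx2
    obtain ⟨hx2D, hx2f, hx2g⟩ := hx2
    obtain ⟨r12, hr12C, hr12F, a', b', ha', hb', hab', hr12G⟩ :=
      exists_zero_on_segment C hC (fun z => crossP u (z - c)) (fun z => crossP v (z - c)) hFa hGa x1 x2 hx1C hx2C hx1f.le hx2f.le
    have hg12 : 0 ≤ crossP v (r12 - c) := by
      rw [hr12G]
      nlinarith [mul_nonneg ha' hx1g.le, mul_nonneg hb' hx2g.le]
    exact hkey r12 hr12C hr12F hg12
  -- every point of C outside R1 has g ≤ 0
  have hgle : ∀ x, x ∈ C → x ∉ R1 → crossP v (x - c) ≤ 0 := by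
    intro x hxC hxR1
    by_contra hg
    push_neg at hg
    have hxD := hCd hxC
    have hf1 : ¬ (0 < crossP u (x - c)) := fun hf => hxR1 (by rw [hR1]; exact ⟨hxD, hf, hg⟩)
    have hf2 : ¬ (crossP u (x - c) < 0) := by
      intro hf
      have hmem : x ∈ C ∩ R2 := ⟨hxC, by rw [hR2]; exact ⟨hxD, hf, hg⟩⟩
      rw [hR2empty] at hmem
      exact hmem
    have hf0 : crossP u (x - c) = 0 := le_antisymm (not_lt.mp hf1) (not_lt.mp hf2)
    exact hkey x hxC hf0 hg.le
  -- points of R3 and R4 near c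
  have hDsq : 0 < (crossP u v) ^ 2 := lt_of_le_of_ne (sq_nonneg _) (Ne.symm (pow_ne_zero 2 huv))
  obtain ⟨ε3, hε3, hy3D⟩ := exists_near c hcd (crossP u v • (u - v))
  obtain ⟨ε4, hε4, hy4D⟩ := exists_near c hcd (crossP u v • (u + v))
  have hy3f : crossP u (c + ε3 • (crossP u v • (u - v)) - c) < 0 := by
    rw [add_sub_cancel_left, crossP_smul, crossP_smul]
    have h : crossP u (u - v) = -(crossP u v) := by simp only [crossP, Prod.fst_sub, Prod.snd_sub]; ring
    rw [h]
    nlinarith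
  have hy3g : crossP v (c + ε3 • (crossP u v • (u - v)) - c) < 0 := by
    rw [add_sub_cancel_left, crossP_smul, crossP_smul]
    have h : crossP v (u - v) = -(crossP u v) := by simp only [crossP, Prod.fst_sub, Prod.snd_sub]; ring
    rw [h]
    nlinarith
  have hy4f : 0 < crossP u (c + ε4 • (crossP u v • (u + v)) - c) := by
    rw [add_sub_cancel_left, crossP_smul, crossP_smul]
    have h : crossP u (u + v) = crossP u v := by simp only [crossP, Prod.fst_add, Prod.snd_add]; ring
    rw [h]
    nlinarith
  have hy4g : crossP v (c + ε4 • (crossP u v • (u + v)) - c) < 0 := by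
    rw [add_sub_cancel_left, crossP_smul, crossP_smul]
    have h : crossP v (u + v) = -(crossP u v) := by simp only [crossP, Prod.fst_add, Prod.snd_add]; ring
    rw [h]
    nlinarith
  -- membership in closures
  have hsubR3 : ∀ x ∈ unitDisk, crossP u (x - c) ≤ 0 → crossP v (x - c) ≤ 0 →
      x ∈ closure R3 := by
    intro x hxD hf hg
    rw [hR3]
    exact mem_closure_aux (fun z => crossP u (z - c)) (fun z => crossP v (z - c))
      hFa hGa _ hy3D hy3f hy3g x hxD hf hg
  have hFa' : ∀ (a b : ℝ) (x y : ℝ × ℝ), a + b = 1 →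
      (fun z => -crossP u (z - c)) (a • x + b • y) =
        a * (fun z => -crossP u (z - c)) x + b * (fun z => -crossP u (z - c)) y := by
    intro a b x y hab
    simp only
    rw [crossP_affine u c a b x y hab]
    ring
  have hsubR4 : ∀ x ∈ unitDisk, 0 ≤ crossP u (x - c) → crossP v (x - c) ≤ 0 →
      x ∈ closure R4 := by
    intro x hxD hf hg
    have hR4' : R4 = unitDisk ∩ {z | (fun z => -crossP u (z - c)) z < 0 ∧ crossP v (z - c) < 0} := by
      rw [hR4]
      ext z
      simp only [Set.mem_inter_iff, Set.mem_setOf_eq]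
      constructor
      · rintro ⟨h, h1, h2⟩; exact ⟨h, by simpa using h1, h2⟩
      · rintro ⟨h, h1, h2⟩; exact ⟨h, by simpa using h1, h2⟩
    rw [hR4']
    exact mem_closure_aux (fun z => -crossP u (z - c)) (fun z => crossP v (z - c))
      hFa' hGa _ hy4D (by simpa using hy4f) hy4g x hxD (by simpa using hf) hg
  -- the set equality
  have heq : C \ R1 = C ∩ (closure R3 ∪ closure R4) := by
    apply Set.Subset.antisymm
    · rintro x ⟨hxC, hxR1⟩
      have hg := hgle x hxC hxR1
      have hxD := hCd hxC
      rcases le_total (crossP u (x - c)) 0 with hf | hf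
      · exact ⟨hxC, Or.inl (hsubR3 x hxD hf hg)⟩
      · exact ⟨hxC, Or.inr (hsubR4 x hxD hf hg)⟩
    · rintro x ⟨hxC, hx⟩
      refine ⟨hxC, fun hxR1 => ?_⟩
      rw [hR1] at hxR1
      rcases hx with h | h
      · exact absurd hxR1.2.1 (not_lt.2 (hclR3 h).1)
      · exact absurd hxR1.2.2 (not_lt.2 (hclR4 h).2)
  -- convexity
  have heq2 : C \ R1 = C ∩ {x | crossP v (x - c) ≤ 0} := by
    apply Set.Subset.antisymm
    · rintro x ⟨hxC, hxR1⟩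
      exact ⟨hxC, hgle x hxC hxR1⟩
    · rintro x ⟨hxC, hg⟩
      refine ⟨hxC, fun hxR1 => ?_⟩
      rw [hR1] at hxR1
      exact absurd hxR1.2.2 (not_lt.2 hg)
  exact ⟨hR2empty, heq, by rw [heq2]; exact hC.inter (halfplane_convex v c)⟩
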